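/- arXiv:1108.6013 — 10 statements merged into one kernel-verified Lean document; each statement's English description precedes it below -/
import Mathlib

section
/- The curvature set L̃²_m = {(A,A,B) ∈ Π_m : B^i_{jk} + B^i_{kj} = 0 for all i,j,k} is a subgroup of Π_m: it contains the identity, is closed under multiplication, and is closed under inversion. -/
open Matrix BigOperators

noncomputable section

/-- Square m×m real matrices. -/
abbrev Mat (m : ℕ) := Matrix (Fin m) (Fin m) ℝ

/-- Arrays B^i_{jk} of real numbers. -/
abbrev Arr (m : ℕ) := Fin m → Fin m → Fin m → ℝ

/-- Underlying data of an element (P, A, B) of the principal jet group Π_m. -/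
abbrev PiEl (m : ℕ) := Mat m × Mat m × Arr m

/-- Membership in Π_m : both matrices P and A are invertible. -/
def inPi {m : ℕ} (x : PiEl m) : Prop := IsUnit x.1 ∧ IsUnit x.2.1

/-- The multiplication of Π_m :
`(P₁,A₁,B₁)·(P₂,A₂,B₂) = (P₁P₂, A₁A₂, B₃)` with
`B₃^i_{jk} = Σ_{h,l} B₁^i_{hl} A₂^h_j P₂^l_k + Σ_h A₁^i_h B₂^h_{jk}`. -/
def piMul {m : ℕ} (x y : PiEl m) : PiEl m :=
  (x.1 * y.1, x.2.1 * y.2.1,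
    fun i j k => (∑ h, ∑ l, x.2.2 i h l * y.2.1 h j * y.1 l k) + ∑ h, x.2.1 i h * y.2.2 h j k)

/-- The identity element (I, I, 0) of Π_m. -/
def piOne (m : ℕ) : PiEl m := (1, 1, fun _ _ _ => 0)

/-- The inverse (P⁻¹, A⁻¹, B⁻) with
`B⁻^i_{jk} = − Σ_{h,p,l} (A⁻¹)^i_h B^h_{pl} (A⁻¹)^p_j (P⁻¹)^l_k`. -/
def piInv {m : ℕ} (x : PiEl m) : PiEl m :=
  (x.1⁻¹, x.2.1⁻¹,
    fun i j k => -∑ h, ∑ p, ∑ l, x.2.1⁻¹ i h * x.2.2 h p l * x.2.1⁻¹ p j * x.1⁻¹ l k)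

/-- Curvature condition: P = A and B^i_{jk} + B^i_{kj} = 0. -/
def curvEl {m : ℕ} (x : PiEl m) : Prop :=
  x.1 = x.2.1 ∧ ∀ i j k, x.2.2 i j k + x.2.2 i k j = 0

/-- the curvature set L̃²_m = {(A,A,B) ∈ Π_m : B^i_{jk} + B^i_{kj} = 0}
is a subgroup of Π_m: it contains the identity, is closed under multiplication,
and is closed under inversion. -/
theorem stmt_5 (m : ℕ) (hm : 1 ≤ m) :
    curvEl (piOne m) ∧
    (∀ x y : PiEl m, inPi x → inPi y → curvEl x → curvEl y → curvEl (piMul x y)) ∧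
    (∀ x : PiEl m, inPi x → curvEl x → curvEl (piInv x)) := by
  refine ⟨⟨rfl, fun i j k => by simp [piOne]⟩, ?_, ?_⟩
  · rintro x y hx hy ⟨hx1, hx2⟩ ⟨hy1, hy2⟩
    refine ⟨by simp [piMul, hx1, hy1], fun i j k => ?_⟩
    simp only [piMul]
    have e2 : (∑ h, x.2.1 i h * y.2.2 h j k) + (∑ h, x.2.1 i h * y.2.2 h k j) = 0 := by
      rw [← Finset.sum_add_distrib]
      refine Finset.sum_eq_zero fun h _ => ?_
      rw [← mul_add, hy2, mul_zero]
    have e1 : (∑ h, ∑ l, x.2.2 i h l * y.2.1 h j * y.1 l k)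
        + (∑ h, ∑ l, x.2.2 i h l * y.2.1 h k * y.1 l j) = 0 := by
      rw [Finset.sum_comm (f := fun h l => x.2.2 i h l * y.2.1 h k * y.1 l j),
        ← Finset.sum_add_distrib]
      refine Finset.sum_eq_zero fun h _ => ?_
      rw [← Finset.sum_add_distrib]
      refine Finset.sum_eq_zero fun l _ => ?_
      have h2 := hx2 i h l
      rw [hy1]
      linear_combination (y.2.1 h j * y.2.1 l k) * h2
    linarith [e1, e2]
  · rintro x hx ⟨hx1, hx2⟩
    refine ⟨by simp [piInv, hx1], fun i j k => ?_⟩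
    simp only [piInv]
    rw [hx1]
    have : (∑ h, ∑ p, ∑ l, x.2.1⁻¹ i h * x.2.2 h p l * x.2.1⁻¹ p j * x.2.1⁻¹ l k)
        + (∑ h, ∑ p, ∑ l, x.2.1⁻¹ i h * x.2.2 h p l * x.2.1⁻¹ p k * x.2.1⁻¹ l j) = 0 := by
      rw [← Finset.sum_add_distrib]
      refine Finset.sum_eq_zero fun h _ => ?_
      rw [Finset.sum_comm (f := fun p l => x.2.1⁻¹ i h * x.2.2 h p l * x.2.1⁻¹ p k * x.2.1⁻¹ l j),
        ← Finset.sum_add_distrib]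
      refine Finset.sum_eq_zero fun p _ => ?_
      rw [← Finset.sum_add_distrib]
      refine Finset.sum_eq_zero fun l _ => ?_
      have h2 := hx2 h p l
      linear_combination (x.2.1⁻¹ i h * x.2.1⁻¹ p j * x.2.1⁻¹ l k) * h2
    linarith [this]
end
end

section
/- The symmetrization map ∨ : L̂²_m → L̄²_m, (A, A, B) ↦ (A, A, B_sym) with B_sym^i_{jk} = (B^i_{jk} + B^i_{kj})/2, is a surjective group homomorphism from the semiholonomic subgroup onto the holonomic subgroup of Π_m, and its kernel is exactly the set {(I, I, B) : B^i_{jk} + B^i_{kj} = 0 for all i,j,k}. -/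
open Matrix BigOperators

noncomputable section

/-- Semiholonomic condition: P = A. -/
def semihEl {m : ℕ} (x : PiEl m) : Prop := x.1 = x.2.1

/-- Holonomic condition: P = A and B^i_{jk} = B^i_{kj}. -/
def holEl {m : ℕ} (x : PiEl m) : Prop :=
  x.1 = x.2.1 ∧ ∀ i j k, x.2.2 i j k = x.2.2 i k j

/-- The symmetrization map ∨ : (A,A,B) ↦ (A,A,B_sym), B_sym^i_{jk} = (B^i_{jk}+B^i_{kj})/2. -/
def symmMap {m : ℕ} (x : PiEl m) : PiEl m :=
  (x.1, x.2.1, fun i j k => (x.2.2 i j k + x.2.2 i k j) / 2)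

/-- the symmetrization map ∨ : L̂²_m → L̄²_m is a surjective group
homomorphism from the semiholonomic subgroup onto the holonomic subgroup of Π_m,
whose kernel is exactly {(I,I,B) : B^i_{jk} + B^i_{kj} = 0}. -/
theorem stmt_6 (m : ℕ) (hm : 1 ≤ m) :
    (∀ x : PiEl m, inPi x → semihEl x → inPi (symmMap x) ∧ holEl (symmMap x)) ∧
    (∀ x y : PiEl m, inPi x → inPi y → semihEl x → semihEl y →
      symmMap (piMul x y) = piMul (symmMap x) (symmMap y)) ∧
    (∀ z : PiEl m, inPi z → holEl z →
      ∃ x : PiEl m, inPi x ∧ semihEl x ∧ symmMap x = z) ∧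
    (∀ x : PiEl m, inPi x → semihEl x →
      (symmMap x = piOne m ↔
        (x.1 = 1 ∧ x.2.1 = 1 ∧ ∀ i j k, x.2.2 i j k + x.2.2 i k j = 0))) := by
  refine ⟨?_, ?_, ?_, ?_⟩
  · intro x hx hs
    exact ⟨⟨hx.1, hx.2⟩, hs, fun i j k => by simp [symmMap]; ring⟩
  · intro x y hx hy hsx hsy
    unfold semihEl at hsx hsy
    refine Prod.ext rfl (Prod.ext rfl ?_)
    funext i j k
    simp only [symmMap, piMul, hsy]
    have hswap : (∑ h, ∑ l, x.2.2 i h l * y.2.1 h k * y.2.1 l j)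
        = ∑ h, ∑ l, x.2.2 i l h * y.2.1 h j * y.2.1 l k := by
      rw [Finset.sum_comm]
      apply Finset.sum_congr rfl; intro h _
      apply Finset.sum_congr rfl; intro l _
      ring
    rw [hswap]
    rw [show (∑ h, ∑ l, (x.2.2 i h l + x.2.2 i l h) / 2 * y.2.1 h j * y.2.1 l k)
        = ∑ h, ∑ l, (x.2.2 i h l * y.2.1 h j * y.2.1 l k
            + x.2.2 i l h * y.2.1 h j * y.2.1 l k) / 2 from by
      apply Finset.sum_congr rfl; intro h _
      apply Finset.sum_congr rfl; intro l _
      ring]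
    rw [show (∑ h, x.2.1 i h * ((y.2.2 h j k + y.2.2 h k j) / 2))
        = ∑ h, (x.2.1 i h * y.2.2 h j k + x.2.1 i h * y.2.2 h k j) / 2 from by
      apply Finset.sum_congr rfl; intro h _; ring]
    rw [show (∑ h, ∑ l, (x.2.2 i h l * y.2.1 h j * y.2.1 l k
            + x.2.2 i l h * y.2.1 h j * y.2.1 l k) / 2)
        = (∑ h, ∑ l, (x.2.2 i h l * y.2.1 h j * y.2.1 l k
            + x.2.2 i l h * y.2.1 h j * y.2.1 l k)) / 2 from by
      simp [Finset.sum_div]]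
    simp only [add_div, Finset.sum_add_distrib, Finset.sum_div]
    ring
  · intro z hz hzhol
    refine ⟨z, hz, hzhol.1, ?_⟩
    refine Prod.ext rfl (Prod.ext rfl ?_)
    funext i j k
    simp only [symmMap]
    rw [← hzhol.2 i j k]
    ring
  · intro x hx hs
    constructor
    · intro h
      have h1 : x.1 = 1 := congrArg Prod.fst h
      have h2 : x.2.1 = 1 := congrArg (fun p => p.2.1) h
      have h3 := congrArg (fun p => p.2.2) h
      refine ⟨h1, h2, fun i j k => ?_⟩
      have := congrFun (congrFun (congrFun h3 i) j) k
      simp only [symmMap, piOne] at this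
      linarith
    · rintro ⟨h1, h2, h3⟩
      refine Prod.ext h1 (Prod.ext h2 ?_)
      funext i j k
      simp [symmMap, piOne]
      linarith [h3 i j k]
end
end

section
/- The exchange map e(P,A,B) = (A, P, Bᵀ) with Bᵀ{}^i_{jk} = B^i_{kj} restricts to a group automorphism of the semiholonomic subgroup L̂²_m of order two, and its fixed-point set in L̂²_m is exactly the holonomic subgroup L̄²_m. -/
open Matrix BigOperators

noncomputable section

/-- The exchange map e(P,A,B) = (A, P, Bᵀ) with Bᵀ{}^i_{jk} = B^i_{kj}. -/
def exch {m : ℕ} (x : PiEl m) : PiEl m :=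
  (x.2.1, x.1, fun i j k => x.2.2 i k j)

/-- the exchange map restricts to a group automorphism of the
semiholonomic subgroup L̂²_m of order two (it preserves L̂²_m ⊂ Π_m, is a
homomorphism there, and squares to the identity), and its fixed-point set in
L̂²_m is exactly the holonomic subgroup L̄²_m. -/
theorem stmt_7 (m : ℕ) (hm : 1 ≤ m) :
    (∀ x : PiEl m, inPi x → semihEl x → inPi (exch x) ∧ semihEl (exch x)) ∧
    (∀ x y : PiEl m, inPi x → inPi y → semihEl x → semihEl y →
      exch (piMul x y) = piMul (exch x) (exch y)) ∧
    (∀ x : PiEl m, inPi x → semihEl x → exch (exch x) = x) ∧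
    (∀ x : PiEl m, inPi x → semihEl x → (exch x = x ↔ holEl x)) := by
  refine ⟨?_, ?_, ?_, ?_⟩
  · rintro ⟨P, A, B⟩ ⟨h1, h2⟩ hs
    exact ⟨⟨h2, h1⟩, hs.symm⟩
  · rintro ⟨P₁, P₁, B₁⟩ ⟨P₂, P₂, B₂⟩ _ _ hs₁ hs₂
    simp only [semihEl] at hs₁ hs₂
    subst hs₁; subst hs₂
    show (_, _, _) = ((_, _, _) : PiEl m)
    refine congrArg (Prod.mk _) (congrArg (Prod.mk _) ?_)
    funext i j k
    show (∑ h, ∑ l, B₁ i h l * P₂ h k * P₂ l j) + ∑ h, P₁ i h * B₂ h k j =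
      (∑ h, ∑ l, B₁ i l h * P₂ h j * P₂ l k) + ∑ h, P₁ i h * B₂ h k j
    rw [Finset.sum_comm (s := Finset.univ) (t := Finset.univ)
      (f := fun h l => B₁ i h l * P₂ h k * P₂ l j)]
    congr 1
    exact Finset.sum_congr rfl fun h _ => Finset.sum_congr rfl fun l _ => by ring
  · rintro ⟨P, A, B⟩ _ _; rfl
  · rintro ⟨P, A, B⟩ _ hs
    simp only [semihEl] at hs; subst hs
    constructor
    · intro h
      have h2 := congrArg (fun z : PiEl m => z.2.2) h
      exact ⟨rfl, fun i j k => (congrFun (congrFun (congrFun h2 i) j) k).symm⟩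
    · rintro ⟨_, hB⟩
      show (_, _, _) = ((_, _, _) : PiEl m)
      exact congrArg (Prod.mk _) (congrArg (Prod.mk _)
        (funext fun i => funext fun j => funext fun k => (hB i j k).symm))
end
end

section
/- The curvature subgroup L̃²_m is the internal semidirect product of the subgroup G₀ = {(A,A,0) : A an invertible m×m real matrix} and the subgroup N = {(I,I,B) : B^i_{jk} + B^i_{kj} = 0}: N is a normal subgroup of L̃²_m, G₀ ∩ N is trivial, and every element of L̃²_m can be written (uniquely) as a product g₀ · n with g₀ ∈ G₀ and n ∈ N. -/
open Matrix BigOperators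

noncomputable section

/-- Membership in G₀ = {(A,A,0) : A invertible}. -/
def inG0 {m : ℕ} (x : PiEl m) : Prop :=
  IsUnit x.1 ∧ x.2.1 = x.1 ∧ ∀ i j k, x.2.2 i j k = 0

/-- Membership in N = {(I,I,B) : B^i_{jk} + B^i_{kj} = 0}. -/
def inN {m : ℕ} (x : PiEl m) : Prop :=
  x.1 = 1 ∧ x.2.1 = 1 ∧ ∀ i j k, x.2.2 i j k + x.2.2 i k j = 0


lemma sum_mul_one_one {m : ℕ} (B : Arr m) (i j k : Fin m) :
    ∑ h, ∑ l, B i h l * (1 : Mat m) h j * (1 : Mat m) l k = B i j k := by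
  simp [Matrix.one_apply, mul_ite, ite_mul, Finset.sum_ite_eq']

lemma anti_pull {m : ℕ} (f : Fin m → Fin m → ℝ) (Q : Mat m)
    (hf : ∀ h l, f h l + f l h = 0) (j k : Fin m) :
    (∑ h, ∑ l, f h l * Q h j * Q l k) + (∑ h, ∑ l, f h l * Q h k * Q l j) = 0 := by
  have h2 : (∑ h, ∑ l, f h l * Q h k * Q l j) = ∑ h, ∑ l, f l h * Q h j * Q l k := by
    rw [Finset.sum_comm]
    exact Finset.sum_congr rfl fun h _ => Finset.sum_congr rfl fun l _ => by ring
  rw [h2, ← Finset.sum_add_distrib]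
  refine Finset.sum_eq_zero fun h _ => ?_
  rw [← Finset.sum_add_distrib]
  refine Finset.sum_eq_zero fun l _ => ?_
  rw [← add_mul, ← add_mul, hf h l, zero_mul, zero_mul]

lemma cancel_sum {m : ℕ} (M N : Mat m) (h : M * N = 1) (v : Fin m → ℝ) (i : Fin m) :
    ∑ p, M i p * ∑ q, N p q * v q = v i := by
  have hv : M *ᵥ (N *ᵥ v) = v := by rw [Matrix.mulVec_mulVec, h, Matrix.one_mulVec]
  simpa [Matrix.mulVec, dotProduct] using congrFun hv i

/-- the curvature subgroup L̃²_m is the internal semidirect product of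
G₀ = {(A,A,0)} and N = {(I,I,B) : B antisymmetric}: N is normal in L̃²_m, G₀ ∩ N is
trivial, and every element of L̃²_m is uniquely a product g₀ · n with g₀ ∈ G₀, n ∈ N. -/
theorem stmt_8 (m : ℕ) (hm : 1 ≤ m) :
    (∀ g x : PiEl m, inPi g → curvEl g → inN x →
      inN (piMul (piMul g x) (piInv g))) ∧
    (∀ x : PiEl m, inG0 x → inN x → x = piOne m) ∧
    (∀ x : PiEl m, inPi x → curvEl x →
      ∃! p : PiEl m × PiEl m, inG0 p.1 ∧ inN p.2 ∧ piMul p.1 p.2 = x) := by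
  refine ⟨?_, ?_, ?_⟩
  · -- N is normal
    rintro ⟨A, A', B⟩ ⟨Q, R, C⟩ ⟨-, hA⟩ ⟨hPA, hB⟩ ⟨hQ, hR, hC⟩
    simp only at hPA hB hQ hR hC hA
    subst hPA hQ hR
    have hdet : IsUnit A.det := (Matrix.isUnit_iff_isUnit_det A).mp hA
    have h1 : A * A⁻¹ = 1 := Matrix.mul_nonsing_inv A hdet
    simp only [piMul, piInv, inN, mul_one]
    refine ⟨h1, h1, ?_⟩
    intro i j k
    simp only [sum_mul_one_one]
    have e1 :
        (∑ h, ∑ l, (B i h l + ∑ a, A i a * C a h l) * A⁻¹ h j * A⁻¹ l k) +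
        (∑ h, ∑ l, (B i h l + ∑ a, A i a * C a h l) * A⁻¹ h k * A⁻¹ l j) = 0 := by
      refine anti_pull _ _ (fun h l => ?_) j k
      have hc : (∑ a, A i a * C a h l) + (∑ a, A i a * C a l h) = 0 := by
        rw [← Finset.sum_add_distrib]
        exact Finset.sum_eq_zero fun a _ => by rw [← mul_add, hC a h l, mul_zero]
      have hb := hB i h l
      linarith
    have e2 : ∀ h : Fin m,
        (-∑ a, ∑ p, ∑ l, A⁻¹ h a * B a p l * A⁻¹ p j * A⁻¹ l k) +
        (-∑ a, ∑ p, ∑ l, A⁻¹ h a * B a p l * A⁻¹ p k * A⁻¹ l j) = 0 := by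
      intro h
      have reorder : ∀ u v : Fin m,
          (∑ a, ∑ p, ∑ l, A⁻¹ h a * B a p l * A⁻¹ p u * A⁻¹ l v)
            = ∑ p, ∑ l, (∑ a, A⁻¹ h a * B a p l) * A⁻¹ p u * A⁻¹ l v := by
        intro u v
        rw [Finset.sum_comm]
        refine Finset.sum_congr rfl fun p _ => ?_
        rw [Finset.sum_comm]
        refine Finset.sum_congr rfl fun l _ => ?_
        simp only [Finset.sum_mul]
      have hanti : ∀ p l : Fin m,
          (∑ a, A⁻¹ h a * B a p l) + (∑ a, A⁻¹ h a * B a l p) = 0 := by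
        intro p l
        rw [← Finset.sum_add_distrib]
        exact Finset.sum_eq_zero fun a _ => by rw [← mul_add, hB a p l, mul_zero]
      have := anti_pull (fun p l => ∑ a, A⁻¹ h a * B a p l) A⁻¹ hanti j k
      rw [reorder, reorder]
      linarith
    have e2' :
        (∑ h, A i h * (-∑ a, ∑ p, ∑ l, A⁻¹ h a * B a p l * A⁻¹ p j * A⁻¹ l k)) +
        (∑ h, A i h * (-∑ a, ∑ p, ∑ l, A⁻¹ h a * B a p l * A⁻¹ p k * A⁻¹ l j)) = 0 := by
      rw [← Finset.sum_add_distrib]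
      exact Finset.sum_eq_zero fun h _ => by rw [← mul_add, e2 h, mul_zero]
    linarith
  · -- trivial intersection
    rintro ⟨P, A, B⟩ ⟨-, -, hZ⟩ ⟨h1, h2, -⟩
    simp only at hZ h1 h2
    subst h1 h2
    simp only [piOne, Prod.mk.injEq]
    exact ⟨trivial, trivial, funext fun i => funext fun j => funext fun k => hZ i j k⟩
  · -- existence and uniqueness of decomposition
    rintro ⟨A, A', B⟩ ⟨-, hA⟩ ⟨hPA, hB⟩
    simp only at hPA hB hA
    subst hPA
    have hdet : IsUnit A.det := (Matrix.isUnit_iff_isUnit_det A).mp hA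
    have h1 : A * A⁻¹ = 1 := Matrix.mul_nonsing_inv A hdet
    have h1' : A⁻¹ * A = 1 := Matrix.nonsing_inv_mul A hdet
    refine ⟨⟨(A, A, fun _ _ _ => 0), (1, 1, fun i j k => ∑ p, A⁻¹ i p * B p j k)⟩,
      ⟨⟨hA, rfl, fun _ _ _ => rfl⟩, ⟨rfl, rfl, fun i j k => ?_⟩, ?_⟩, ?_⟩
    · rw [← Finset.sum_add_distrib]
      exact Finset.sum_eq_zero fun p _ => by rw [← mul_add, hB p j k, mul_zero]
    · simp only [piMul, mul_one, Prod.mk.injEq]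
      refine ⟨trivial, trivial, funext fun i => funext fun j => funext fun k => ?_⟩
      simp only [zero_mul, Finset.sum_const_zero, zero_add]
      exact cancel_sum A A⁻¹ h1 (fun q => B q j k) i
    · rintro ⟨⟨P₁, A₁, B₁⟩, ⟨P₂, A₂, B₂⟩⟩ ⟨⟨-, hEq, hZ⟩, ⟨h21, h22, -⟩, hmul⟩
      simp only at hEq hZ h21 h22
      subst hEq h21 h22
      have hfst : A = A₁ := by
        have := congrArg Prod.fst hmul
        simpa [piMul] using this.symm
      subst hfst
      have h3 : ∀ i j k, (∑ h, ∑ l, B₁ i h l * (1 : Mat m) h j * (1 : Mat m) l k)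
          + ∑ h, A i h * B₂ h j k = B i j k := by
        intro i j k
        have := congrArg (fun t : PiEl m => t.2.2 i j k) hmul
        simpa [piMul] using this
      have hAB : ∀ i j k, ∑ h, A i h * B₂ h j k = B i j k := by
        intro i j k
        have := h3 i j k
        rw [sum_mul_one_one] at this
        have hz : B₁ i j k = 0 := hZ i j k
        rw [hz, zero_add] at this
        exact this
      have hB2 : ∀ i j k, B₂ i j k = ∑ p, A⁻¹ i p * B p j k := by
        intro i j k
        have := cancel_sum A⁻¹ A h1' (fun q => B₂ q j k) i
        calc B₂ i j k = ∑ p, A⁻¹ i p * ∑ q, A p q * B₂ q j k := this.symm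
          _ = ∑ p, A⁻¹ i p * B p j k :=
            Finset.sum_congr rfl fun p _ => by rw [hAB p j k]
      simp only [Prod.mk.injEq]
      refine ⟨⟨trivial, trivial, funext fun i => funext fun j => funext fun k => hZ i j k⟩,
        trivial, trivial, funext fun i => funext fun j => funext fun k => hB2 i j k⟩
end
end

section
/- The right action of Π_m on V_{m,n} is free on the set of triples (U,W,C) in which both n×m matrices U and W have rank m: if U and W have rank m and (U,W,C)·(P,A,B) = (U,W,C), then P = I, A = I and B = 0. -/
open Matrix BigOperators

noncomputable section

/-- Rectangular n×m real matrices. -/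
abbrev RMat (m n : ℕ) := Matrix (Fin n) (Fin m) ℝ

/-- Arrays C^a_{ij}, a ∈ Fin n, i j ∈ Fin m. -/
abbrev CArr (m n : ℕ) := Fin n → Fin m → Fin m → ℝ

/-- Underlying data (U, W, C) of an element of V_{m,n}. -/
abbrev VEl (m n : ℕ) := RMat m n × RMat m n × CArr m n

/-- The right action of Π_m on V_{m,n}:
`(U,W,C)·(P,A,B) = (UA, WP, C')` with
`C'^a_{ij} = Σ_{h,k} C^a_{hk} A^h_i P^k_j + Σ_h U^a_h B^h_{ij}`. -/
def vact {m n : ℕ} (v : VEl m n) (g : PiEl m) : VEl m n :=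
  (v.1 * g.2.1, v.2.1 * g.1,
    fun a i j => (∑ h, ∑ k, v.2.2 a h k * g.2.1 h i * g.1 k j) + ∑ h, v.1 a h * g.2.2 h i j)

lemma inj_of_rank_eq {m n : ℕ} (U : Matrix (Fin n) (Fin m) ℝ) (hU : U.rank = m) :
    Function.Injective U.mulVec := by
  have h := LinearMap.finrank_range_add_finrank_ker U.mulVecLin
  rw [Matrix.rank] at hU
  rw [hU, Module.finrank_fin_fun] at h
  have hker : LinearMap.ker U.mulVecLin = ⊥ :=
    Submodule.finrank_eq_zero.mp (by omega)
  exact LinearMap.ker_eq_bot.mp hker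

lemma eq_one_of_mul_self {m n : ℕ} (U : Matrix (Fin n) (Fin m) ℝ) (hU : U.rank = m)
    (A : Matrix (Fin m) (Fin m) ℝ) (h : U * A = U) : A = 1 := by
  have hinj := inj_of_rank_eq U hU
  have hv : ∀ x : Fin m → ℝ, A.mulVec x = x := by
    intro x
    apply hinj
    rw [Matrix.mulVec_mulVec, h]
  ext i j
  have := congrFun (hv (Pi.single j 1)) i
  simpa [Matrix.mulVec, dotProduct, Pi.single_apply, Matrix.one_apply,
    eq_comm] using this

/-- the right action of Π_m on V_{m,n} is free on the set of triples
(U,W,C) where both U and W have rank m. -/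
theorem stmt_10 (m n : ℕ) (hm : 1 ≤ m) (hmn : m ≤ n)
    (U W : RMat m n) (C : CArr m n) (hU : U.rank = m) (hW : W.rank = m)
    (P A : Mat m) (B : Arr m) (hP : IsUnit P) (hA : IsUnit A)
    (hfix : vact (U, W, C) (P, A, B) = (U, W, C)) :
    P = 1 ∧ A = 1 ∧ ∀ i j k, B i j k = 0 := by
  have h1 : U * A = U := congrArg Prod.fst hfix
  have h2 : W * P = W := congrArg (fun v => v.2.1) hfix
  have h3 := congrArg (fun v => v.2.2) hfix
  have hA1 : A = 1 := eq_one_of_mul_self U hU A h1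
  have hP1 : P = 1 := eq_one_of_mul_self W hW P h2
  refine ⟨hP1, hA1, ?_⟩
  have hinj := inj_of_rank_eq U hU
  intro i j k
  have key : ∀ a, U.mulVec (fun h => B h j k) a = 0 := by
    intro a
    have := congrFun (congrFun (congrFun h3 a) j) k
    simp only [vact, hA1, hP1, Matrix.one_apply] at this
    simp only [mul_ite, mul_one, mul_zero, ite_mul, zero_mul,
      Finset.sum_ite_eq', Finset.mem_univ, if_true] at this
    have : C a j k + ∑ h, U a h * B h j k = C a j k := this
    simpa [Matrix.mulVec, dotProduct] using by linarith [this]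
  have : (fun h => B h j k) = (0 : Fin m → ℝ) := by
    apply hinj
    ext a
    simp [key a]
  exact congrFun this i
end
end

section
/- The right action of the semiholonomic subgroup L̂²_m on V_{m,n} is free on the set of triples whose first matrix has rank m: if the n×m matrix U has rank m and (A,A,B) ∈ L̂²_m satisfies (U,W,C)·(A,A,B) = (U,W,C), then A = I and B = 0. -/
open Matrix BigOperators

noncomputable section

/-- the right action of the semiholonomic subgroup L̂²_m on V_{m,n} is
free on the set of triples whose first matrix has rank m. -/
theorem stmt_11 (m n : ℕ) (hm : 1 ≤ m) (hmn : m ≤ n)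
    (U W : RMat m n) (C : CArr m n) (hU : U.rank = m)
    (A : Mat m) (B : Arr m) (hA : IsUnit A)
    (hfix : vact (U, W, C) (A, A, B) = (U, W, C)) :
    A = 1 ∧ ∀ i j k, B i j k = 0 := by
  -- U has full column rank, so mulVecLin is injective
  have hinj : Function.Injective U.mulVecLin := by
    rw [← LinearMap.ker_eq_bot, ← Submodule.finrank_eq_zero (R := ℝ)]
    have h1 := LinearMap.finrank_range_add_finrank_ker U.mulVecLin
    have h2 : Module.finrank ℝ (LinearMap.range U.mulVecLin) = m := hU
    have h3 : Module.finrank ℝ (Fin m → ℝ) = m := by simp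
    omega
  have hUA : U * A = U := congrArg Prod.fst hfix
  have hAone : A = 1 := by
    ext i j
    have hcol : U.mulVecLin (fun k => A k j) = U.mulVecLin (fun k => (1 : Mat m) k j) := by
      funext a
      have := congrFun (congrFun hUA a) j
      simp only [Matrix.mul_apply] at this
      simpa [Matrix.mulVecLin_apply, Matrix.mulVec, dotProduct,
        Matrix.one_apply, Finset.sum_ite_eq', mul_comm] using this
    exact congrFun (hinj hcol) i
  refine ⟨hAone, fun i j k => ?_⟩
  have hC : (fun a i j => (∑ h, ∑ k, C a h k * A h i * A k j) + ∑ h, U a h * B h i j)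
      = C := congrArg (fun p => p.2.2) hfix
  have h0 : U.mulVecLin (fun h => B h j k) = U.mulVecLin (fun h => (0 : ℝ)) := by
    funext a
    have := congrFun (congrFun (congrFun hC a) j) k
    subst hAone
    simp only [Matrix.one_apply] at this
    simp only [mul_ite, mul_one, mul_zero, ite_mul, zero_mul,
      Finset.sum_ite_eq', Finset.mem_univ, if_true] at this
    simp only [Matrix.mulVecLin_apply, Matrix.mulVec, dotProduct, mul_zero,
      Finset.sum_const_zero]
    linarith [this]
  have := congrFun (hinj h0) i
  simpa using this
end
end

section
/- An element g = (P,A,B) ∈ Π_m maps holonomic regular triples to holonomic triples if and only if g belongs to the holonomic subgroup; more precisely: (i) if P = A and B^i_{jk} = B^i_{kj} for all i,j,k, then for every triple (U,U,C) with C^a_{ij} = C^a_{ji} the image (U,U,C)·g is again of the form (U',U',C') with C'^a_{ij} = C'^a_{ji}; and (ii) if there exists at least one triple (U,U,C) with U of rank m and C^a_{ij} = C^a_{ji} whose image (U,U,C)·g is of the form (U',U',C') with C'^a_{ij} = C'^a_{ji}, then P = A and B^i_{jk} = B^i_{kj} for all i,j,k. -/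
open Matrix BigOperators

noncomputable section

lemma full_rank_mulVec_inj {m n : ℕ} (U : RMat m n) (hU : U.rank = m) :
    ∀ v : Fin m → ℝ, U.mulVec v = 0 → v = 0 := by
  intro v hv
  have h1 := LinearMap.finrank_range_add_finrank_ker U.mulVecLin
  rw [show Module.finrank ℝ (Fin m → ℝ) = m by simp] at h1
  have hr : Module.finrank ℝ (LinearMap.range U.mulVecLin) = m := hU
  have hker : Module.finrank ℝ (LinearMap.ker U.mulVecLin) = 0 := by omega
  have : LinearMap.ker U.mulVecLin = ⊥ := Submodule.finrank_eq_zero.mp hker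
  have hv' : v ∈ LinearMap.ker U.mulVecLin := by
    simpa [LinearMap.mem_ker, Matrix.mulVecLin_apply] using hv
  rw [this] at hv'
  simpa using hv'

/-- an element g = (P,A,B) ∈ Π_m maps holonomic regular triples to
holonomic triples iff g is holonomic: (i) if P = A and B is symmetric then the
image of any (U,U,C) with C symmetric is again semiholonomic with symmetric third
component; (ii) if this holds for at least one such triple with U of rank m, then
P = A and B is symmetric. -/
theorem stmt_13 (m n : ℕ) (hm : 1 ≤ m) (hmn : m ≤ n)
    (P A : Mat m) (B : Arr m) (hP : IsUnit P) (hA : IsUnit A) :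
    ((P = A ∧ ∀ i j k, B i j k = B i k j) →
      ∀ (U : RMat m n) (C : CArr m n), (∀ a i j, C a i j = C a j i) →
        (vact (U, U, C) (P, A, B)).1 = (vact (U, U, C) (P, A, B)).2.1 ∧
        (∀ a i j, (vact (U, U, C) (P, A, B)).2.2 a i j
                = (vact (U, U, C) (P, A, B)).2.2 a j i)) ∧
    ((∃ (U : RMat m n) (C : CArr m n), U.rank = m ∧ (∀ a i j, C a i j = C a j i) ∧
        (vact (U, U, C) (P, A, B)).1 = (vact (U, U, C) (P, A, B)).2.1 ∧
        (∀ a i j, (vact (U, U, C) (P, A, B)).2.2 a i j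
                = (vact (U, U, C) (P, A, B)).2.2 a j i)) →
      P = A ∧ ∀ i j k, B i j k = B i k j) := by
  constructor
  · rintro ⟨hPA, hB⟩ U C hC
    subst hPA
    refine ⟨rfl, fun a i j => ?_⟩
    simp only [vact]
    congr 1
    · rw [Finset.sum_comm]
      apply Finset.sum_congr rfl; intro h _
      apply Finset.sum_congr rfl; intro k _
      rw [hC a k h]; ring
    · exact Finset.sum_congr rfl fun h _ => by rw [hB h i j]
  · rintro ⟨U, C, hU, hC, h1, h2⟩
    have hinj := full_rank_mulVec_inj U hU
    have hPA : P = A := by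
      have : U * (A - P) = 0 := by
        have : U * A = U * P := by simpa [vact] using h1
        rw [Matrix.mul_sub, this, sub_self]
      have hAP : A = P := by
        ext i j
        have := congrFun (hinj (fun h => (A - P) h j)
          (by ext a; simpa [Matrix.mulVec, dotProduct, Matrix.mul_apply] using
            congrFun (congrFun this a) j)) i
        simpa [sub_eq_zero] using this
      exact hAP.symm
    subst hPA
    refine ⟨rfl, fun i j k => ?_⟩
    have key := h2
    simp only [vact] at key
    have hsym : ∀ a i j, (∑ h, ∑ k, C a h k * P h i * P k j)
        = ∑ h, ∑ k, C a h k * P h j * P k i := by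
      intro a i j
      rw [Finset.sum_comm]
      apply Finset.sum_congr rfl; intro h _
      apply Finset.sum_congr rfl; intro k _
      rw [hC a k h]; ring
    have hUB : ∀ a i j, (∑ h, U a h * B h i j) = ∑ h, U a h * B h j i := by
      intro a i j
      have := key a i j
      rw [hsym a i j] at this
      linarith
    have := hinj (fun h => B h j k - B h k j) (by
      ext a
      have := hUB a j k
      simp [Matrix.mulVec, dotProduct, mul_sub, Finset.sum_sub_distrib]
      linarith)
    have := congrFun this i
    simpa [sub_eq_zero] using this
end
end

section
/- The quotient coordinates v are invariant under the semiholonomic action: let n > m, let U be an n×m real matrix whose top m×m block Q is invertible, let C : Fin n → Fin m → Fin m → ℝ, and let (A,A,B) ∈ L̂²_m. If (U', 0, C') = (U, 0, C)·(A,A,B), then the top m×m block Q' of U' = UA is again invertible and v^α_{ij}(U', C') = v^α_{ij}(U, C) for all α ∈ {m+1,…,n} and all i,j. -/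
open Matrix BigOperators

noncomputable section

/-- The top m×m block Q of an n×m matrix U (rows 1,…,m). -/
def topBlock {m n : ℕ} (hmn : m ≤ n) (U : RMat m n) : Mat m :=
  fun i j => U (Fin.castLE hmn i) j

/-- The quotient coordinates: with r = Q⁻¹ the inverse of the top block of U,
`v^α_{ij}(U,C) = Σ_{h,k} C^α_{hk} r^h_i r^k_j
              − Σ_{h,k,p,q} U^α_h r^h_k C^k_{pq} r^p_i r^q_j`. -/
def vcoord {m n : ℕ} (hmn : m ≤ n) (U : RMat m n) (C : CArr m n)
    (α : Fin n) (i j : Fin m) : ℝ :=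
  (∑ h, ∑ k, C α h k * (topBlock hmn U)⁻¹ h i * (topBlock hmn U)⁻¹ k j) -
    ∑ h, ∑ k, ∑ p, ∑ q, U α h * (topBlock hmn U)⁻¹ h k *
      C (Fin.castLE hmn k) p q * (topBlock hmn U)⁻¹ p i * (topBlock hmn U)⁻¹ q j


private lemma sum3_swap {ι : Type*} [Fintype ι] (f : ι → ι → ι → ℝ) :
    ∑ a, ∑ b, ∑ c, f a b c = ∑ c, ∑ a, ∑ b, f a b c := by
  calc ∑ a, ∑ b, ∑ c, f a b c
      = ∑ a, ∑ c, ∑ b, f a b c := Finset.sum_congr rfl fun a _ => Finset.sum_comm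
    _ = ∑ c, ∑ a, ∑ b, f a b c := Finset.sum_comm

private lemma sum4_swap {ι : Type*} [Fintype ι] (f : ι → ι → ι → ι → ℝ) :
    ∑ a, ∑ b, ∑ c, ∑ d, f a b c d = ∑ c, ∑ d, ∑ a, ∑ b, f a b c d := by
  calc ∑ a, ∑ b, ∑ c, ∑ d, f a b c d
      = ∑ a, ∑ c, ∑ b, ∑ d, f a b c d := Finset.sum_congr rfl fun a _ => Finset.sum_comm
    _ = ∑ c, ∑ a, ∑ b, ∑ d, f a b c d := Finset.sum_comm
    _ = ∑ c, ∑ a, ∑ d, ∑ b, f a b c d :=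
        Finset.sum_congr rfl fun c _ => Finset.sum_congr rfl fun a _ => Finset.sum_comm
    _ = ∑ c, ∑ d, ∑ a, ∑ b, f a b c d := Finset.sum_congr rfl fun c _ => Finset.sum_comm

private lemma factor2 {ι : Type*} [Fintype ι] (c : ℝ) (f g : ι → ℝ) :
    (∑ h, ∑ k, c * f h * g k) = c * (∑ h, f h) * (∑ k, g k) := by
  rw [mul_assoc, Finset.sum_mul_sum]
  simp only [Finset.mul_sum]
  exact Finset.sum_congr rfl fun h _ => Finset.sum_congr rfl fun k _ => by ring

/-- the quotient coordinates v are invariant under the semiholonomic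
action: if U has invertible top block and (U',0,C') = (U,0,C)·(A,A,B) with
(A,A,B) ∈ L̂²_m, then U' has invertible top block and
v^α_{ij}(U',C') = v^α_{ij}(U,C) for all α ∈ {m+1,…,n} and all i,j. -/
theorem stmt_15 (m n : ℕ) (hm : 1 ≤ m) (hmn : m < n)
    (U : RMat m n) (C : CArr m n) (hQ : IsUnit (topBlock hmn.le U))
    (A : Mat m) (B : Arr m) (hA : IsUnit A) :
    IsUnit (topBlock hmn.le (vact (U, 0, C) (A, A, B)).1) ∧
    ∀ α : Fin n, m ≤ (α : ℕ) → ∀ i j : Fin m,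
      vcoord hmn.le (vact (U, 0, C) (A, A, B)).1 (vact (U, 0, C) (A, A, B)).2.2 α i j
        = vcoord hmn.le U C α i j := by
  set Q := topBlock hmn.le U with hQdef
  have hdetA : IsUnit A.det := (Matrix.isUnit_iff_isUnit_det A).mp hA
  have hdetQ : IsUnit Q.det := (Matrix.isUnit_iff_isUnit_det Q).mp hQ
  have htop : topBlock hmn.le (vact (U, 0, C) (A, A, B)).1 = Q * A := by
    ext x y; simp [vact, topBlock, Matrix.mul_apply, hQdef]
  refine ⟨by rw [htop]; exact hQ.mul hA, ?_⟩
  intro α hα i j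
  have hinv : (topBlock hmn.le (vact (U, 0, C) (A, A, B)).1)⁻¹ = A⁻¹ * Q⁻¹ := by
    rw [htop, Matrix.mul_inv_rev]
  have hU' : ∀ a h, (vact (U, 0, C) (A, A, B)).1 a h = ∑ c, U a c * A c h := by
    intro a h; simp [vact, Matrix.mul_apply]
  have hC' : ∀ a x y, (vact (U, 0, C) (A, A, B)).2.2 a x y =
      (∑ u, ∑ w, C a u w * A u x * A w y) + ∑ u, U a u * B u x y := by
    intro a x y; simp [vact]
  simp only [vcoord, hinv, hU', hC', ← hQdef]
  set S : Mat m := A⁻¹ * Q⁻¹ with hSdef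
  set R : Mat m := Q⁻¹ with hRdef
  -- basic matrix identities
  have hASR : A * S = R := by rw [hSdef, ← Matrix.mul_assoc, Matrix.mul_nonsing_inv A hdetA, Matrix.one_mul]
  have hRQ : R * Q = 1 := Matrix.nonsing_inv_mul Q hdetQ
  have L1 : ∀ u x, ∑ h, A u h * S h x = R u x := by
    intro u x
    have := congrFun (congrFun hASR u) x
    simpa [Matrix.mul_apply] using this
  have L2 : ∀ x, ∑ h, (∑ c, U α c * A c h) * S h x = ∑ c, U α c * R c x := by
    intro x
    have h1 : U * A * S = U * R := by rw [Matrix.mul_assoc, hASR]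
    have := congrFun (congrFun h1 α) x
    simpa [Matrix.mul_apply] using this
  have L3 : ∀ u, ∑ k, (∑ c, U α c * R c k) * Q k u = U α u := by
    intro u
    have h1 : U * R * Q = U := by rw [Matrix.mul_assoc, hRQ, Matrix.mul_one]
    have := congrFun (congrFun h1 α) u
    simpa [Matrix.mul_apply] using this
  have hQU : ∀ (k u : Fin m), U (Fin.castLE hmn.le k) u = Q k u := fun _ _ => rfl
  -- the B-contraction
  set T : Fin m → ℝ := fun u => ∑ h, ∑ k, B u h k * S h i * S k j with hTdef
  -- step1 : the C-part of a transformed array contracts to the original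
  have step1 : ∀ a : Fin n,
      (∑ h, ∑ k, (∑ u, ∑ w, C a u w * A u h * A w k) * S h i * S k j)
        = ∑ u, ∑ w, C a u w * R u i * R w j := by
    intro a
    calc (∑ h, ∑ k, (∑ u, ∑ w, C a u w * A u h * A w k) * S h i * S k j)
        = ∑ h, ∑ k, ∑ u, ∑ w, C a u w * A u h * A w k * S h i * S k j := by
          simp only [Finset.sum_mul]
      _ = ∑ u, ∑ w, ∑ h, ∑ k, C a u w * A u h * A w k * S h i * S k j :=
          sum4_swap _
      _ = ∑ u, ∑ w, ∑ h, ∑ k, C a u w * (A u h * S h i) * (A w k * S k j) :=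
          Finset.sum_congr rfl fun u _ => Finset.sum_congr rfl fun w _ =>
            Finset.sum_congr rfl fun h _ => Finset.sum_congr rfl fun k _ => by ring
      _ = ∑ u, ∑ w, C a u w * (∑ h, A u h * S h i) * (∑ k, A w k * S k j) :=
          Finset.sum_congr rfl fun u _ => Finset.sum_congr rfl fun w _ => factor2 _ _ _
      _ = ∑ u, ∑ w, C a u w * R u i * R w j := by simp only [L1]
  -- step2 : the B-part contracts to a U-weighted sum of T
  have step2 : ∀ a : Fin n,
      (∑ h, ∑ k, (∑ u, U a u * B u h k) * S h i * S k j) = ∑ u, U a u * T u := by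
    intro a
    calc (∑ h, ∑ k, (∑ u, U a u * B u h k) * S h i * S k j)
        = ∑ h, ∑ k, ∑ u, U a u * B u h k * S h i * S k j := by
          simp only [Finset.sum_mul]
      _ = ∑ u, ∑ h, ∑ k, U a u * B u h k * S h i * S k j := sum3_swap _
      _ = ∑ u, U a u * T u := by
          refine Finset.sum_congr rfl fun u _ => ?_
          rw [hTdef]
          simp only [Finset.mul_sum]
          exact Finset.sum_congr rfl fun h _ => Finset.sum_congr rfl fun k _ => by ring
  -- the inner double sum appearing in the second big term
  set X : Fin m → ℝ := fun k => ∑ u, ∑ w, C (Fin.castLE hmn.le k) u w * R u i * R w j with hXdef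
  -- second big sum of LHS
  have big2 :
      (∑ h, ∑ k, ∑ p, ∑ q, (∑ c, U α c * A c h) * S h k *
          ((∑ u, ∑ w, C (Fin.castLE hmn.le k) u w * A u p * A w q) +
            ∑ u, U (Fin.castLE hmn.le k) u * B u p q) * S p i * S q j)
        = (∑ k, (∑ c, U α c * R c k) * X k) + ∑ u, U α u * T u := by
    calc (∑ h, ∑ k, ∑ p, ∑ q, (∑ c, U α c * A c h) * S h k *
          ((∑ u, ∑ w, C (Fin.castLE hmn.le k) u w * A u p * A w q) +
            ∑ u, U (Fin.castLE hmn.le k) u * B u p q) * S p i * S q j)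
        = ∑ h, ∑ k, ((∑ c, U α c * A c h) * S h k) *
            (∑ p, ∑ q, ((∑ u, ∑ w, C (Fin.castLE hmn.le k) u w * A u p * A w q) +
              ∑ u, U (Fin.castLE hmn.le k) u * B u p q) * S p i * S q j) := by
          refine Finset.sum_congr rfl fun h _ => Finset.sum_congr rfl fun k _ => ?_
          simp only [Finset.mul_sum]
          exact Finset.sum_congr rfl fun p _ => Finset.sum_congr rfl fun q _ => by ring
      _ = ∑ k, ∑ h, ((∑ c, U α c * A c h) * S h k) *
            (∑ p, ∑ q, ((∑ u, ∑ w, C (Fin.castLE hmn.le k) u w * A u p * A w q) +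
              ∑ u, U (Fin.castLE hmn.le k) u * B u p q) * S p i * S q j) := Finset.sum_comm
      _ = ∑ k, (∑ h, (∑ c, U α c * A c h) * S h k) *
            (∑ p, ∑ q, ((∑ u, ∑ w, C (Fin.castLE hmn.le k) u w * A u p * A w q) +
              ∑ u, U (Fin.castLE hmn.le k) u * B u p q) * S p i * S q j) :=
          Finset.sum_congr rfl fun k _ => (Finset.sum_mul _ _ _).symm
      _ = ∑ k, (∑ c, U α c * R c k) * (X k + ∑ u, Q k u * T u) := by
          refine Finset.sum_congr rfl fun k _ => ?_
          rw [L2]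
          congr 1
          have hsplit : (∑ p, ∑ q, ((∑ u, ∑ w, C (Fin.castLE hmn.le k) u w * A u p * A w q) +
              ∑ u, U (Fin.castLE hmn.le k) u * B u p q) * S p i * S q j)
            = (∑ p, ∑ q, (∑ u, ∑ w, C (Fin.castLE hmn.le k) u w * A u p * A w q) * S p i * S q j)
              + ∑ p, ∑ q, (∑ u, U (Fin.castLE hmn.le k) u * B u p q) * S p i * S q j := by
            rw [← Finset.sum_add_distrib]
            refine Finset.sum_congr rfl fun p _ => ?_
            rw [← Finset.sum_add_distrib]
            exact Finset.sum_congr rfl fun q _ => by ring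
          rw [hsplit, step1, step2, hXdef]
          simp only [hQU]
      _ = (∑ k, (∑ c, U α c * R c k) * X k) + ∑ u, U α u * T u := by
          have : ∀ k, (∑ c, U α c * R c k) * (X k + ∑ u, Q k u * T u)
              = (∑ c, U α c * R c k) * X k + ∑ u, ((∑ c, U α c * R c k) * Q k u) * T u := by
            intro k
            rw [mul_add]
            congr 1
            rw [Finset.mul_sum]
            exact Finset.sum_congr rfl fun u _ => by ring
          simp only [this]
          rw [Finset.sum_add_distrib]
          congr 1
          rw [Finset.sum_comm]
          refine Finset.sum_congr rfl fun u _ => ?_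
          rw [← Finset.sum_mul, L3]
  -- second big sum of RHS
  have big2R :
      (∑ h, ∑ k, ∑ p, ∑ q, U α h * R h k * C (Fin.castLE hmn.le k) p q * R p i * R q j)
        = ∑ k, (∑ c, U α c * R c k) * X k := by
    calc (∑ h, ∑ k, ∑ p, ∑ q, U α h * R h k * C (Fin.castLE hmn.le k) p q * R p i * R q j)
        = ∑ h, ∑ k, (U α h * R h k) *
            (∑ p, ∑ q, C (Fin.castLE hmn.le k) p q * R p i * R q j) := by
          refine Finset.sum_congr rfl fun h _ => Finset.sum_congr rfl fun k _ => ?_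
          simp only [Finset.mul_sum]
          exact Finset.sum_congr rfl fun p _ => Finset.sum_congr rfl fun q _ => by ring
      _ = ∑ k, ∑ h, (U α h * R h k) *
            (∑ p, ∑ q, C (Fin.castLE hmn.le k) p q * R p i * R q j) := Finset.sum_comm
      _ = ∑ k, (∑ c, U α c * R c k) * X k := by
          refine Finset.sum_congr rfl fun k _ => ?_
          rw [← Finset.sum_mul, hXdef]
  -- assemble
  have bigsplit :
      (∑ h, ∑ k, ((∑ u, ∑ w, C α u w * A u h * A w k) + ∑ u, U α u * B u h k) * S h i * S k j)
        = (∑ u, ∑ w, C α u w * R u i * R w j) + ∑ u, U α u * T u := by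
    have hsplit : (∑ h, ∑ k, ((∑ u, ∑ w, C α u w * A u h * A w k) + ∑ u, U α u * B u h k) * S h i * S k j)
        = (∑ h, ∑ k, (∑ u, ∑ w, C α u w * A u h * A w k) * S h i * S k j)
          + ∑ h, ∑ k, (∑ u, U α u * B u h k) * S h i * S k j := by
      rw [← Finset.sum_add_distrib]
      refine Finset.sum_congr rfl fun h _ => ?_
      rw [← Finset.sum_add_distrib]
      exact Finset.sum_congr rfl fun k _ => by ring
    rw [hsplit, step1, step2]
  rw [bigsplit, big2, big2R]
  ring
end
end

section
/- Orbit classification for vertical triples: let n > m, and let (U, 0, C) and (U', 0, C') be triples in V_{m,n} such that the top m×m blocks Q of U and Q' of U' are invertible. Then there exists (A,A,B) ∈ L̂²_m with (U,0,C)·(A,A,B) = (U',0,C') if and only if there exists an invertible m×m real matrix A with U' = UA and v^α_{ij}(U,C) = v^α_{ij}(U',C') for all α ∈ {m+1,…,n} and all i,j. -/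
open Matrix BigOperators

noncomputable section

variable {m : ℕ}

lemma swap3 {α : Type*} [AddCommMonoid α] (f : Fin m → Fin m → Fin m → α) :
    ∑ h, ∑ k, ∑ l, f h k l = ∑ l, ∑ h, ∑ k, f h k l := by
  rw [show (∑ h, ∑ k, ∑ l, f h k l) = ∑ h, ∑ l, ∑ k, f h k l from
    Finset.sum_congr rfl fun _ _ => Finset.sum_comm, Finset.sum_comm]

lemma swap4 {α : Type*} [AddCommMonoid α] (f : Fin m → Fin m → Fin m → Fin m → α) :
    ∑ h, ∑ k, ∑ p, ∑ q, f h k p q = ∑ p, ∑ q, ∑ h, ∑ k, f h k p q := by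
  calc ∑ h, ∑ k, ∑ p, ∑ q, f h k p q
      = ∑ h, ∑ p, ∑ k, ∑ q, f h k p q :=
        Finset.sum_congr rfl fun _ _ => Finset.sum_comm
    _ = ∑ h, ∑ p, ∑ q, ∑ k, f h k p q :=
        Finset.sum_congr rfl fun _ _ => Finset.sum_congr rfl fun _ _ => Finset.sum_comm
    _ = ∑ p, ∑ h, ∑ q, ∑ k, f h k p q := Finset.sum_comm
    _ = ∑ p, ∑ q, ∑ h, ∑ k, f h k p q :=
        Finset.sum_congr rfl fun _ _ => Finset.sum_comm

lemma conjsum (A r' r : Mat m) (f1 : ∀ p i, ∑ h, A p h * r' h i = r p i)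
    (M : Fin m → Fin m → ℝ) (i j : Fin m) :
    ∑ p, ∑ q, (∑ s, ∑ t, M s t * A s p * A t q) * r' p i * r' q j
      = ∑ s, ∑ t, M s t * r s i * r t j := by
  calc ∑ p, ∑ q, (∑ s, ∑ t, M s t * A s p * A t q) * r' p i * r' q j
      = ∑ p, ∑ q, ∑ s, ∑ t, M s t * (A s p * r' p i) * (A t q * r' q j) := by
        simp only [Finset.sum_mul]
        exact Finset.sum_congr rfl fun _ _ => Finset.sum_congr rfl fun _ _ =>
          Finset.sum_congr rfl fun _ _ => Finset.sum_congr rfl fun _ _ => by ring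
    _ = ∑ s, ∑ t, ∑ p, ∑ q, M s t * (A s p * r' p i) * (A t q * r' q j) := swap4 _
    _ = ∑ s, ∑ t, M s t * (∑ p, A s p * r' p i) * (∑ q, A t q * r' q j) := by
        simp only [Finset.mul_sum, Finset.sum_mul]
        refine Finset.sum_congr rfl fun s _ => Finset.sum_congr rfl fun t _ => ?_
        rw [Finset.sum_comm]
    _ = ∑ s, ∑ t, M s t * r s i * r t j := by
        exact Finset.sum_congr rfl fun s _ => Finset.sum_congr rfl fun t _ => by
          rw [f1, f1]

lemma factor_out (w : Fin m → ℝ) (B : Arr m) (y : Mat m) (i j : Fin m) :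
    ∑ h, ∑ k, (∑ l, w l * B l h k) * y h i * y k j
      = ∑ l, w l * (∑ h, ∑ k, B l h k * y h i * y k j) := by
  calc ∑ h, ∑ k, (∑ l, w l * B l h k) * y h i * y k j
      = ∑ h, ∑ k, ∑ l, w l * (B l h k * y h i * y k j) := by
        simp only [Finset.sum_mul]
        exact Finset.sum_congr rfl fun _ _ => Finset.sum_congr rfl fun _ _ =>
          Finset.sum_congr rfl fun _ _ => by ring
    _ = ∑ l, ∑ h, ∑ k, w l * (B l h k * y h i * y k j) := swap3 _
    _ = ∑ l, w l * (∑ h, ∑ k, B l h k * y h i * y k j) := by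
        simp only [Finset.mul_sum]

lemma collapse (w : Fin m → ℝ) (x : Mat m) (g : Arr m) (y : Mat m) (i j : Fin m) :
    ∑ h, ∑ k, ∑ p, ∑ q, w h * x h k * g k p q * y p i * y q j
      = ∑ k, (∑ h, w h * x h k) * (∑ p, ∑ q, g k p q * y p i * y q j) := by
  calc ∑ h, ∑ k, ∑ p, ∑ q, w h * x h k * g k p q * y p i * y q j
      = ∑ k, ∑ h, ∑ p, ∑ q, w h * x h k * g k p q * y p i * y q j := Finset.sum_comm
    _ = ∑ k, ∑ p, ∑ q, ∑ h, w h * x h k * g k p q * y p i * y q j :=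
        Finset.sum_congr rfl fun k _ =>
          (swap3 fun p q h => w h * x h k * g k p q * y p i * y q j).symm
    _ = ∑ k, (∑ h, w h * x h k) * (∑ p, ∑ q, g k p q * y p i * y q j) := by
        simp only [Finset.sum_mul, Finset.mul_sum]
        exact Finset.sum_congr rfl fun _ _ => Finset.sum_congr rfl fun _ _ =>
          Finset.sum_congr rfl fun _ _ => Finset.sum_congr rfl fun _ _ => by ring

lemma swap_factor (F : Fin m → ℝ) (G : Mat m) (Y : Fin m → ℝ) :
    ∑ k, F k * (∑ l, G k l * Y l) = ∑ l, (∑ k, F k * G k l) * Y l := by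
  simp only [Finset.mul_sum, Finset.sum_mul]
  rw [Finset.sum_comm]
  exact Finset.sum_congr rfl fun _ _ => Finset.sum_congr rfl fun _ _ => by ring

lemma key {m n : ℕ} (hmn : m ≤ n) (U : RMat m n) (A : Mat m) (B : Arr m) (C : CArr m n)
    (hQ : IsUnit (topBlock hmn U)) (hA : IsUnit A) (α : Fin n) (i j : Fin m) :
    vcoord hmn (U * A)
      (fun a i j => (∑ h, ∑ k, C a h k * A h i * A k j) + ∑ h, U a h * B h i j) α i j
      = vcoord hmn U C α i j := by
  have hdA : IsUnit A.det := (Matrix.isUnit_iff_isUnit_det A).1 hA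
  have hdQ : IsUnit (topBlock hmn U).det := (Matrix.isUnit_iff_isUnit_det _).1 hQ
  set Q := topBlock hmn U with hQdef
  set r := Q⁻¹ with hrdef
  set r' := A⁻¹ * r with hr'def
  have htop : topBlock hmn (U * A) = Q * A := by
    ext a b; simp [topBlock, Matrix.mul_apply, hQdef]
  have hrinv : (topBlock hmn (U * A))⁻¹ = r' := by
    rw [htop, Matrix.mul_inv_rev, hr'def, hrdef]
  have hUQ : ∀ (k : Fin m) (l : Fin m), U (Fin.castLE hmn k) l = Q k l := fun _ _ => rfl
  have f1 : ∀ p i, ∑ h, A p h * r' h i = r p i := by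
    intro p i
    have h1 : A * r' = r := by
      rw [hr'def, ← Matrix.mul_assoc, Matrix.mul_nonsing_inv _ hdA, Matrix.one_mul]
    calc ∑ h, A p h * r' h i = (A * r') p i := (Matrix.mul_apply).symm
      _ = r p i := by rw [h1]
  have f2 : ∀ (a : Fin n) (k : Fin m), ∑ h, (U * A) a h * r' h k = ∑ h, U a h * r h k := by
    intro a k
    have h1 : (U * A) * r' = U * r := by
      rw [hr'def, Matrix.mul_assoc U A, ← Matrix.mul_assoc A, Matrix.mul_nonsing_inv _ hdA,
        Matrix.one_mul]
    calc ∑ h, (U * A) a h * r' h k = ((U * A) * r') a k := (Matrix.mul_apply).symm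
      _ = (U * r) a k := by rw [h1]
      _ = ∑ h, U a h * r h k := Matrix.mul_apply
  have f3 : ∀ (a : Fin n) (l : Fin m), ∑ k, (∑ h, U a h * r h k) * Q k l = U a l := by
    intro a l
    have h1 : U * r * Q = U := by
      rw [hrdef, Matrix.mul_assoc, Matrix.nonsing_inv_mul _ hdQ, Matrix.mul_one]
    calc ∑ k, (∑ h, U a h * r h k) * Q k l
        = ∑ k, (U * r) a k * Q k l :=
          Finset.sum_congr rfl fun k _ => by rw [← Matrix.mul_apply]
      _ = (U * r * Q) a l := (Matrix.mul_apply).symm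
      _ = U a l := by rw [h1]
  rw [vcoord, vcoord, hrinv]
  simp only [hUQ]
  rw [← hQdef, ← hrdef]
  have E1 : ∑ h, ∑ k, ((∑ s, ∑ t, C α s t * A s h * A t k) + ∑ l, U α l * B l h k)
        * r' h i * r' k j
      = (∑ h, ∑ k, C α h k * r h i * r k j)
        + ∑ l, U α l * (∑ p, ∑ q, B l p q * r' p i * r' q j) := by
    simp only [add_mul, Finset.sum_add_distrib]
    rw [conjsum A r' r f1 (C α) i j, factor_out (fun l => U α l) B r' i j]
  have E2 : ∑ h, ∑ k, ∑ p, ∑ q, (U * A) α h * r' h k *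
        ((∑ s, ∑ t, C (Fin.castLE hmn k) s t * A s p * A t q) + ∑ l, Q k l * B l p q)
        * r' p i * r' q j
      = (∑ h, ∑ k, ∑ p, ∑ q, U α h * r h k * C (Fin.castLE hmn k) p q * r p i * r q j)
        + ∑ l, U α l * (∑ p, ∑ q, B l p q * r' p i * r' q j) := by
    have hsplit : ∑ h, ∑ k, ∑ p, ∑ q, (U * A) α h * r' h k *
          ((∑ s, ∑ t, C (Fin.castLE hmn k) s t * A s p * A t q) + ∑ l, Q k l * B l p q)
          * r' p i * r' q j
        = (∑ h, ∑ k, ∑ p, ∑ q, (U * A) α h * r' h k *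
            (∑ s, ∑ t, C (Fin.castLE hmn k) s t * A s p * A t q) * r' p i * r' q j)
          + ∑ h, ∑ k, ∑ p, ∑ q, (U * A) α h * r' h k *
            (∑ l, Q k l * B l p q) * r' p i * r' q j := by
      simp only [mul_add, add_mul, Finset.sum_add_distrib]
    have hP3 : ∑ h, ∑ k, ∑ p, ∑ q, (U * A) α h * r' h k *
          (∑ s, ∑ t, C (Fin.castLE hmn k) s t * A s p * A t q) * r' p i * r' q j
        = ∑ h, ∑ k, ∑ p, ∑ q, U α h * r h k * C (Fin.castLE hmn k) p q * r p i * r q j := by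
      rw [collapse (fun h => (U * A) α h) r'
          (fun k p q => ∑ s, ∑ t, C (Fin.castLE hmn k) s t * A s p * A t q) r' i j,
        collapse (fun h => U α h) r (fun k p q => C (Fin.castLE hmn k) p q) r i j]
      exact Finset.sum_congr rfl fun k _ => by
        rw [f2 α k, conjsum A r' r f1 (fun s t => C (Fin.castLE hmn k) s t) i j]
    have hP4 : ∑ h, ∑ k, ∑ p, ∑ q, (U * A) α h * r' h k *
          (∑ l, Q k l * B l p q) * r' p i * r' q j
        = ∑ l, U α l * (∑ p, ∑ q, B l p q * r' p i * r' q j) := by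
      rw [collapse (fun h => (U * A) α h) r'
          (fun k p q => ∑ l, Q k l * B l p q) r' i j]
      have step : ∑ k, (∑ h, (U * A) α h * r' h k) *
            (∑ p, ∑ q, (∑ l, Q k l * B l p q) * r' p i * r' q j)
          = ∑ k, (∑ h, U α h * r h k) *
            (∑ l, Q k l * (∑ p, ∑ q, B l p q * r' p i * r' q j)) :=
        Finset.sum_congr rfl fun k _ => by
          rw [f2 α k, factor_out (fun l => Q k l) B r' i j]
      rw [step, swap_factor (fun k => ∑ h, U α h * r h k) Q
        (fun l => ∑ p, ∑ q, B l p q * r' p i * r' q j)]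
      exact Finset.sum_congr rfl fun l _ => by rw [f3 α l]
    rw [hsplit, hP3, hP4]
  rw [E1, E2]
  ring

lemma conj_eq_zero (r : Mat m) (hr : IsUnit r) (M : Mat m)
    (h : ∀ i j, ∑ h, ∑ k, M h k * r h i * r k j = 0) : M = 0 := by
  have hconj : rᵀ * M * r = 0 := by
    ext i j
    simp only [Matrix.mul_apply, Matrix.transpose_apply, Matrix.zero_apply, Finset.sum_mul]
    rw [← h i j, Finset.sum_comm]
    exact Finset.sum_congr rfl fun _ _ => Finset.sum_congr rfl fun _ _ => by ring
  have hd : IsUnit r.det := (Matrix.isUnit_iff_isUnit_det r).1 hr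
  have hdT : IsUnit rᵀ.det := by simpa using hd
  calc M = rᵀ⁻¹ * (rᵀ * M * r) * r⁻¹ := by
        rw [Matrix.mul_assoc rᵀ M r, Matrix.nonsing_inv_mul_cancel_left _ _ hdT,
          Matrix.mul_nonsing_inv_cancel_right _ _ hd]
    _ = 0 := by rw [hconj]; simp

/-- orbit classification for vertical triples: two vertical triples
(U,0,C) and (U',0,C') with invertible top blocks lie on the same L̂²_m-orbit iff
there is an invertible A with U' = UA and matching quotient coordinates v. -/
theorem stmt_17 (m n : ℕ) (hm : 1 ≤ m) (hmn : m < n)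
    (U U' : RMat m n) (C C' : CArr m n)
    (hQ : IsUnit (topBlock hmn.le U)) (hQ' : IsUnit (topBlock hmn.le U')) :
    (∃ (A : Mat m) (B : Arr m), IsUnit A ∧
        vact (U, 0, C) (A, A, B) = (U', 0, C')) ↔
    (∃ A : Mat m, IsUnit A ∧ U' = U * A ∧
        ∀ α : Fin n, m ≤ (α : ℕ) → ∀ i j : Fin m,
          vcoord hmn.le U C α i j = vcoord hmn.le U' C' α i j) := by
  constructor
  · rintro ⟨A, B, hA, hact⟩
    have h1 : U * A = U' := congrArg Prod.fst hact
    have h3 : (fun a i j => (∑ h, ∑ k, C a h k * A h i * A k j) + ∑ h, U a h * B h i j) = C' :=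
      congrArg (fun p => p.2.2) hact
    exact ⟨A, hA, h1.symm, fun α _ i j => by
      rw [← h1, ← h3]; exact (key hmn.le U A B C hQ hA α i j).symm⟩
  · rintro ⟨A, hA, hUA, hv⟩
    classical
    set Q := topBlock hmn.le U with hQdef
    set r := Q⁻¹ with hrdef
    set D : CArr m n := fun a i j => C' a i j - ∑ h, ∑ k, C a h k * A h i * A k j with hDdef
    set B : Arr m := fun l i j => ∑ k, r l k * D (Fin.castLE hmn.le k) i j with hBdef
    set Cf : CArr m n := fun a i j =>
      (∑ h, ∑ k, C a h k * A h i * A k j) + ∑ h, U a h * B h i j with hCf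
    have hdQ : IsUnit Q.det := (Matrix.isUnit_iff_isUnit_det _).1 hQ
    have hlow : ∀ (k i j : Fin m),
        Cf (Fin.castLE hmn.le k) i j = C' (Fin.castLE hmn.le k) i j := by
      intro k i j
      have hQr : Q * r = 1 := Matrix.mul_nonsing_inv _ hdQ
      have hUB : ∑ h, U (Fin.castLE hmn.le k) h * B h i j = D (Fin.castLE hmn.le k) i j := by
        calc ∑ h, U (Fin.castLE hmn.le k) h * B h i j
            = ∑ h, ∑ s, Q k h * r h s * D (Fin.castLE hmn.le s) i j := by
              refine Finset.sum_congr rfl fun h _ => ?_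
              simp only [hBdef, Finset.mul_sum]
              exact Finset.sum_congr rfl fun s _ => by
                rw [show U (Fin.castLE hmn.le k) h = Q k h from rfl]; ring
          _ = ∑ s, (∑ h, Q k h * r h s) * D (Fin.castLE hmn.le s) i j := by
              rw [Finset.sum_comm]; simp only [Finset.sum_mul]
          _ = ∑ s, (1 : Mat m) k s * D (Fin.castLE hmn.le s) i j := by
              refine Finset.sum_congr rfl fun s _ => ?_
              rw [show (∑ h, Q k h * r h s) = (Q * r) k s from (Matrix.mul_apply).symm, hQr]
          _ = D (Fin.castLE hmn.le k) i j := by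
              simp [Matrix.one_apply]
      simp only [hCf]
      rw [hUB]
      simp only [hDdef]
      ring
    have hhigh : ∀ (α : Fin n), m ≤ (α : ℕ) → ∀ i j, Cf α i j = C' α i j := by
      intro α hα
      have hr' : IsUnit ((topBlock hmn.le U')⁻¹) := Matrix.isUnit_nonsing_inv_iff.2 hQ'
      have hveq : ∀ i j, vcoord hmn.le U' Cf α i j = vcoord hmn.le U' C' α i j := by
        intro i j
        have h1 : vcoord hmn.le (U * A) Cf α i j = vcoord hmn.le U C α i j := by
          have := key hmn.le U A B C hQ hA α i j
          rw [← hCf] at this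
          exact this
        rw [← hUA] at h1
        rw [h1]
        exact hv α hα i j
      have hM : ∀ i j, ∑ h, ∑ k, (Cf α h k - C' α h k) *
          (topBlock hmn.le U')⁻¹ h i * (topBlock hmn.le U')⁻¹ k j = 0 := by
        intro i j
        have h2 := hveq i j
        rw [vcoord, vcoord] at h2
        have hsec : (∑ h, ∑ k, ∑ p, ∑ q, U' α h * (topBlock hmn.le U')⁻¹ h k *
              Cf (Fin.castLE hmn.le k) p q * (topBlock hmn.le U')⁻¹ p i *
              (topBlock hmn.le U')⁻¹ q j)
            = ∑ h, ∑ k, ∑ p, ∑ q, U' α h * (topBlock hmn.le U')⁻¹ h k *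
              C' (Fin.castLE hmn.le k) p q * (topBlock hmn.le U')⁻¹ p i *
              (topBlock hmn.le U')⁻¹ q j := by
          refine Finset.sum_congr rfl fun h _ => Finset.sum_congr rfl fun k _ =>
            Finset.sum_congr rfl fun p _ => Finset.sum_congr rfl fun q _ => ?_
          rw [hlow k p q]
        rw [hsec] at h2
        have h3 := sub_left_inj.1 h2
        simp only [sub_mul, Finset.sum_sub_distrib]
        rw [h3, sub_self]
      have hz := conj_eq_zero _ hr' (fun h k => Cf α h k - C' α h k) hM
      intro i j
      have := congrFun (congrFun hz i) j
      simpa [sub_eq_zero] using this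
    have hCfeq : Cf = C' := by
      funext a i j
      by_cases hcase : (a : ℕ) < m
      · have ha : Fin.castLE hmn.le ⟨(a : ℕ), hcase⟩ = a := rfl
        rw [← ha]; exact hlow _ i j
      · exact hhigh a (le_of_not_gt hcase) i j
    refine ⟨A, B, hA, ?_⟩
    calc vact (U, 0, C) (A, A, B) = (U * A, (0 : RMat m n) * A, Cf) := by
          rw [hCf]; rfl
      _ = (U', 0, C') := by rw [← hUA, Matrix.zero_mul, hCfeq]
end
end

section
/- The holonomic component of a semiholonomic element is independent of the representative: let U be an n×m real matrix of rank m, and suppose (U,U,C)·(P,A,B) = (U',U',C') for some (P,A,B) ∈ Π_m. Then P = A, the element (A, A, B_sym) with B_sym^i_{jk} = (B^i_{jk}+B^i_{kj})/2 belongs to the holonomic subgroup L̄²_m, and (U,U,C_sym)·(A,A,B_sym) = (U',U',C'_sym), where C_sym^a_{ij} = (C^a_{ij}+C^a_{ji})/2 and C'_sym^a_{ij} = (C'^a_{ij}+C'^a_{ji})/2. -/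
open Matrix BigOperators

noncomputable section

/-- A full-rank n×m matrix gives an injective linear map. -/
lemma inj_of_rank {m n : ℕ} (U : Matrix (Fin n) (Fin m) ℝ) (hU : U.rank = m) :
    Function.Injective U.mulVecLin := by
  rw [← LinearMap.ker_eq_bot]
  have h1 := LinearMap.finrank_range_add_finrank_ker U.mulVecLin
  rw [show Module.finrank ℝ ↥(LinearMap.range U.mulVecLin) = m from hU,
    Module.finrank_fintype_fun_eq_card, Fintype.card_fin] at h1
  have : Module.finrank ℝ ↥(LinearMap.ker U.mulVecLin) = 0 := by omega
  exact Submodule.finrank_eq_zero.mp this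

/-- Left cancellation by a full-rank matrix. -/
lemma cancel_of_rank {m n : ℕ} (U : Matrix (Fin n) (Fin m) ℝ) (hU : U.rank = m)
    (X Y : Mat m) (h : U * X = U * Y) : X = Y := by
  have inj := inj_of_rank U hU
  ext i j
  have hcol : U.mulVecLin (fun k => X k j) = U.mulVecLin (fun k => Y k j) := by
    funext a
    simpa [Matrix.mulVecLin, Matrix.mulVec, dotProduct, Matrix.mul_apply] using
      congrFun (congrFun h a) j
  exact congrFun (inj hcol) i

/-- the holonomic component of a semiholonomic element does not depend
on the representative: if U has rank m and (U,U,C)·(P,A,B) = (U',U',C'), then P = A,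
the symmetrized element (A,A,B_sym) lies in the holonomic subgroup L̄²_m, and
(U,U,C_sym)·(A,A,B_sym) = (U',U',C'_sym). -/
theorem stmt_18 (m n : ℕ) (hm : 1 ≤ m) (hmn : m ≤ n)
    (U U' : RMat m n) (C C' : CArr m n) (hU : U.rank = m)
    (P A : Mat m) (B : Arr m) (hP : IsUnit P) (hA : IsUnit A)
    (h : vact (U, U, C) (P, A, B) = (U', U', C')) :
    P = A ∧
    (IsUnit A ∧ ∀ i j k,
      (B i j k + B i k j) / 2 = (B i k j + B i j k) / 2) ∧
    vact (U, U, fun a i j => (C a i j + C a j i) / 2)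
        (A, A, fun i j k => (B i j k + B i k j) / 2)
      = (U', U', fun a i j => (C' a i j + C' a j i) / 2) := by
  simp only [vact, Prod.mk.injEq] at h
  obtain ⟨h1, h2, h3⟩ := h
  have hPA : P = A := cancel_of_rank U hU P A (h2.trans h1.symm)
  subst hPA
  refine ⟨rfl, ⟨hA, fun i j k => by ring⟩, ?_⟩
  simp only [vact, Prod.mk.injEq]
  refine ⟨h1, h2, ?_⟩
  funext a i j
  have h3a := congrFun (congrFun (congrFun h3 a) i) j
  have h3b := congrFun (congrFun (congrFun h3 a) j) i
  rw [← h3a, ← h3b]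
  have key : (∑ h, ∑ k, C a k h * P h i * P k j) = ∑ h, ∑ k, C a h k * P h j * P k i := by
    rw [Finset.sum_comm]
    exact Finset.sum_congr rfl fun h _ => Finset.sum_congr rfl fun k _ => by ring
  have lhs1 : (∑ h, ∑ k, (C a h k + C a k h) / 2 * P h i * P k j)
      = ((∑ h, ∑ k, C a h k * P h i * P k j) + ∑ h, ∑ k, C a h k * P h j * P k i) / 2 := by
    rw [← key]
    simp only [Finset.sum_div, ← Finset.sum_add_distrib]
    exact Finset.sum_congr rfl fun h _ => Finset.sum_congr rfl fun k _ => by ring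
  have lhs2 : (∑ h, U a h * ((B h i j + B h j i) / 2))
      = ((∑ h, U a h * B h i j) + ∑ h, U a h * B h j i) / 2 := by
    simp only [Finset.sum_div, ← Finset.sum_add_distrib]
    exact Finset.sum_congr rfl fun h _ => by ring
  rw [lhs1, lhs2]
  ring
end
end
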